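/- Let S be a finite connected subgraph of the toroidal lattice (Z/L)², and let S̃ ⊆ Z² be its preimage under the quotient map Z² → (Z/L)². Then S contains a closed walk with nonzero net winding vector in Z² if and only if some connected component of S̃ (under nearest-neighbor adjacency in Z²) is invariant under translation by some nonzero vector in L·Z², equivalently is infinite. -/

import Mathlib

/-- A horizontal k-mer on the `L × L` torus with parent site `(x, y)`. -/
def hKmer (L k : ℕ) (x y : ZMod L) : Set (ZMod L × ZMod L) :=
  {s | ∃ j : ℕ, j < k ∧ s = (x + (j : ZMod L), y)}

/-- A vertical k-mer on the `L × L` torus with parent site `(x, y)`. -/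
def vKmer (L k : ℕ) (x y : ZMod L) : Set (ZMod L × ZMod L) :=
  {s | ∃ j : ℕ, j < k ∧ s = (x, y + (j : ZMod L))}

/-- A set of sites is a (horizontal or vertical) k-mer. -/
def IsKmer (L k : ℕ) (m : Set (ZMod L × ZMod L)) : Prop :=
  ∃ x y : ZMod L, m = hKmer L k x y ∨ m = vKmer L k x y

/-- A configuration: a family of pairwise disjoint k-mers. -/
def IsConfig (L k : ℕ) (C : Set (Set (ZMod L × ZMod L))) : Prop :=
  (∀ m ∈ C, IsKmer L k m) ∧ C.Pairwise Disjoint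

/-- A jammed configuration: no further k-mer fits entirely on empty sites. -/
def IsJammed (L k : ℕ) (C : Set (Set (ZMod L × ZMod L))) : Prop :=
  IsConfig L k C ∧ ∀ m, IsKmer L k m → ¬ Disjoint m (⋃₀ C)

/-- Toroidal nearest-neighbor adjacency. -/
def Adj (L : ℕ) (a b : ZMod L × ZMod L) : Prop :=
  b - a ∈ ({((1 : ZMod L), (0 : ZMod L)), (-1, 0), (0, 1), (0, -1)} :
    Set (ZMod L × ZMod L))

/-- `Cl` is a cluster (connected component) of the set `occ` of occupied sites. -/
def IsCluster (L : ℕ) (occ Cl : Set (ZMod L × ZMod L)) : Prop :=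
  ∃ a ∈ occ, Cl =
    {b | b ∈ occ ∧ Relation.ReflTransGen (fun p q => p ∈ occ ∧ q ∈ occ ∧ Adj L p q) a b}

/-- Reduction of an integer vector modulo `L` in both coordinates. -/
def castPair (L : ℕ) (v : ℤ × ℤ) : ZMod L × ZMod L := ((v.1 : ZMod L), (v.2 : ZMod L))

/-- Unit steps in `ℤ²`. -/
def IsUnitStep (v : ℤ × ℤ) : Prop := v = (1, 0) ∨ v = (-1, 0) ∨ v = (0, 1) ∨ v = (0, -1)

/-- `S` wraps around the torus: it contains a closed nearest-neighbor walk whose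
net winding vector (sum of the `ℤ²` lifts of its steps) is nonzero. -/
def Wraps (L : ℕ) (S : Set (ZMod L × ZMod L)) : Prop :=
  ∃ (x : ZMod L × ZMod L) (n : ℕ) (d : Fin n → ℤ × ℤ),
    (∀ i, IsUnitStep (d i)) ∧
    (∀ m : ℕ, m ≤ n → x + castPair L (∑ i : Fin n, if (i : ℕ) < m then d i else 0) ∈ S) ∧
    castPair L (∑ i, d i) = 0 ∧ (∑ i, d i) ≠ 0

/-- Nearest-neighbor adjacency on `ℤ²`. -/
def AdjZ (a b : ℤ × ℤ) : Prop := IsUnitStep (b - a)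

/-- The lift of `S ⊆ (ZMod L)²` under the quotient map `ℤ² → (ZMod L)²`. -/
def lift (L : ℕ) (S : Set (ZMod L × ZMod L)) : Set (ℤ × ℤ) :=
  {p | castPair L p ∈ S}

/-- The connected component of `p` in the lift of `S`, under nearest-neighbor
adjacency in `ℤ²`. -/
def liftComp (L : ℕ) (S : Set (ZMod L × ZMod L)) (p : ℤ × ℤ) : Set (ℤ × ℤ) :=
  {q | Relation.ReflTransGen
    (fun u v => u ∈ lift L S ∧ v ∈ lift L S ∧ AdjZ u v) p q}

section Aux

lemma castPair_add (L : ℕ) (a b : ℤ × ℤ) :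
    castPair L (a + b) = castPair L a + castPair L b := by
  simp [castPair, Prod.ext_iff]

lemma castPair_neg (L : ℕ) (a : ℤ × ℤ) : castPair L (-a) = - castPair L a := by
  simp [castPair, Prod.ext_iff]

lemma castPair_zero (L : ℕ) : castPair L 0 = 0 := by
  simp [castPair, Prod.ext_iff]

lemma unitStep_neg {v : ℤ × ℤ} (h : IsUnitStep v) : IsUnitStep (-v) := by
  rcases h with h | h | h | h <;> subst h <;>
    simp [IsUnitStep, Prod.ext_iff]

lemma rel_symm (L : ℕ) (S : Set (ZMod L × ZMod L)) :
    Symmetric (fun u v => u ∈ lift L S ∧ v ∈ lift L S ∧ AdjZ u v) := by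
  rintro u v ⟨h1, h2, h3⟩
  refine ⟨h2, h1, ?_⟩
  have := unitStep_neg h3
  simpa [AdjZ, neg_sub] using this

lemma comp_symm {L : ℕ} {S : Set (ZMod L × ZMod L)} {p q : ℤ × ℤ}
    (h : q ∈ liftComp L S p) : p ∈ liftComp L S q :=
  haveI : Std.Symm (fun u v => u ∈ lift L S ∧ v ∈ lift L S ∧ AdjZ u v) :=
    ⟨fun _ _ h => rel_symm L S h⟩
  Std.Symm.symm (r := Relation.ReflTransGen
    (fun u v => u ∈ lift L S ∧ v ∈ lift L S ∧ AdjZ u v)) _ _ h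

lemma comp_eq_of_mem {L : ℕ} {S : Set (ZMod L × ZMod L)} {p q : ℤ × ℤ}
    (h : q ∈ liftComp L S p) : liftComp L S q = liftComp L S p := by
  ext r
  exact ⟨fun hr => Relation.ReflTransGen.trans h hr,
    fun hr => Relation.ReflTransGen.trans (comp_symm h) hr⟩

lemma mem_lift_of_mem_comp {L : ℕ} {S : Set (ZMod L × ZMod L)} {p q : ℤ × ℤ}
    (hp : p ∈ lift L S) (h : q ∈ liftComp L S p) : q ∈ lift L S := by
  rcases Relation.ReflTransGen.cases_tail h with h | ⟨c, _, hc⟩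
  · exact h ▸ hp
  · exact hc.2.1

lemma compTranslate {L : ℕ} {S : Set (ZMod L × ZMod L)} {v : ℤ × ℤ}
    (hv : castPair L v = 0) {p q : ℤ × ℤ} (h : q ∈ liftComp L S p) :
    q + v ∈ liftComp L S (p + v) := by
  induction h with
  | refl => exact Relation.ReflTransGen.refl
  | tail _ hrel ih =>
    refine Relation.ReflTransGen.tail ih ⟨?_, ?_, ?_⟩
    · show castPair L _ ∈ S
      rw [castPair_add, hv, add_zero]; exact hrel.1
    · show castPair L _ ∈ S
      rw [castPair_add, hv, add_zero]; exact hrel.2.1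
    · show IsUnitStep _
      have heq : ∀ b c : ℤ × ℤ, (c + v) - (b + v) = c - b := by intro b c; abel
      rw [heq]
      exact hrel.2.2

lemma partial_sum_succ {n : ℕ} (d : Fin n → ℤ × ℤ) (m : ℕ) (hm : m < n) :
    (∑ i : Fin n, if (i : ℕ) < m + 1 then d i else 0) =
    (∑ i : Fin n, if (i : ℕ) < m then d i else 0) + d ⟨m, hm⟩ := by
  have h1 : ∀ i : Fin n, (if (i : ℕ) < m + 1 then d i else 0) =
      (if (i : ℕ) < m then d i else 0) + (if i = ⟨m, hm⟩ then d i else 0) := by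
    intro i
    rcases lt_trichotomy (i : ℕ) m with h | h | h
    · simp [h, Nat.lt_succ_of_lt h, Fin.ext_iff, h.ne]
    · simp [h, Fin.ext_iff, Nat.lt_irrefl]
    · have h2 : ¬ (i : ℕ) < m + 1 := by omega
      have h3 : ¬ (i : ℕ) < m := by omega
      simp [h2, h3, Fin.ext_iff, h.ne']
  rw [Finset.sum_congr rfl (fun i _ => h1 i), Finset.sum_add_distrib,
    Finset.sum_ite_eq' Finset.univ (⟨m, hm⟩ : Fin n) d, if_pos (Finset.mem_univ _)]

lemma walk_to_path (L : ℕ) (S : Set (ZMod L × ZMod L)) (p : ℤ × ℤ) (n : ℕ)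
    (d : Fin n → ℤ × ℤ) (hstep : ∀ i, IsUnitStep (d i))
    (hmem : ∀ m ≤ n, p + (∑ i : Fin n, if (i : ℕ) < m then d i else 0) ∈ lift L S) :
    p + ∑ i, d i ∈ liftComp L S p := by
  have key : ∀ m, m ≤ n →
      p + (∑ i : Fin n, if (i : ℕ) < m then d i else 0) ∈ liftComp L S p := by
    intro m
    induction m with
    | zero =>
      intro _
      have : (∑ i : Fin n, if (i : ℕ) < 0 then d i else 0) = (0 : ℤ × ℤ) := by simp
      rw [this, add_zero]
      exact Relation.ReflTransGen.refl
    | succ m ih =>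
      intro hm
      have hm' : m < n := hm
      rw [partial_sum_succ d m hm', ← add_assoc]
      refine Relation.ReflTransGen.tail (ih hm'.le) ⟨?_, ?_, ?_⟩
      · exact hmem m hm'.le
      · rw [add_assoc, ← partial_sum_succ d m hm']
        exact hmem (m + 1) hm
      · show IsUnitStep _
        have heq : ∀ a b : ℤ × ℤ, (a + b) - a = b := by intro a b; abel
        rw [heq]
        exact hstep _
  have hfin : (∑ i : Fin n, if (i : ℕ) < n then d i else 0) = ∑ i, d i := by
    apply Finset.sum_congr rfl
    intro i _
    simp [i.isLt]
  have := key n le_rfl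
  rwa [hfin] at this

lemma path_to_walk (L : ℕ) (S : Set (ZMod L × ZMod L)) {p q : ℤ × ℤ}
    (hp : p ∈ lift L S)
    (h : Relation.ReflTransGen (fun u v => u ∈ lift L S ∧ v ∈ lift L S ∧ AdjZ u v) p q) :
    ∃ n, ∃ d : Fin n → ℤ × ℤ, (∀ i, IsUnitStep (d i)) ∧
      (∀ m ≤ n, p + (∑ i : Fin n, if (i : ℕ) < m then d i else 0) ∈ lift L S) ∧
      p + ∑ i, d i = q := by
  induction h with
  | refl =>
    refine ⟨0, Fin.elim0, fun i => i.elim0, ?_, by simp⟩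
    intro m _
    simpa using hp
  | @tail b c _ hrel ih =>
    obtain ⟨n, d, hstep, hmem, hsum⟩ := ih
    set e : ℤ × ℤ := c - b with he
    have hsnoc : ∀ m : ℕ,
        (∑ i : Fin (n + 1), if (i : ℕ) < m then (Fin.snoc d e : Fin (n + 1) → ℤ × ℤ) i else 0)
        = (∑ i : Fin n, if (i : ℕ) < m then d i else 0) + (if n < m then e else 0) := by
      intro m
      rw [Fin.sum_univ_castSucc]
      simp
    refine ⟨n + 1, Fin.snoc d e, ?_, ?_, ?_⟩
    · intro i
      refine Fin.lastCases ?_ ?_ i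
      · rw [Fin.snoc_last]
        exact hrel.2.2
      · intro j
        rw [Fin.snoc_castSucc]
        exact hstep j
    · intro m hm
      rw [hsnoc]
      rcases Nat.lt_or_ge m (n + 1) with h1 | h1
      · have h2 : ¬ n < m := by omega
        rw [if_neg h2, add_zero]
        exact hmem m (by omega)
      · have h2 : m = n + 1 := by omega
        have h3 : n < m := by omega
        rw [if_pos h3]
        have h4 : (∑ i : Fin n, if (i : ℕ) < m then d i else 0) = ∑ i, d i := by
          apply Finset.sum_congr rfl
          intro i _
          have : (i : ℕ) < m := by omega
          simp [this]
        rw [h4, ← add_assoc, hsum, he]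
        have : b + (c - b) = c := by abel
        rw [this]
        exact hrel.2.1
    · rw [Fin.sum_univ_castSucc]
      simp only [Fin.snoc_castSucc, Fin.snoc_last]
      rw [← add_assoc, hsum, he]
      abel

end Aux

/-- Let `S` be a finite connected subgraph of the toroidal lattice.  Then `S`
contains a closed walk with nonzero winding vector iff some connected component
of its lift `S̃ ⊆ ℤ²` is invariant under translation by a nonzero vector of
`L·ℤ²`, equivalently iff some component of the lift is infinite. -/
theorem wraps_iff_lift_component (L : ℕ) (hL : 0 < L)
    (S : Set (ZMod L × ZMod L)) (hfin : S.Finite) (hne : S.Nonempty)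
    (hconn : ∀ a ∈ S, ∀ b ∈ S,
      Relation.ReflTransGen (fun p q => p ∈ S ∧ q ∈ S ∧ Adj L p q) a b) :
    (Wraps L S ↔ ∃ p ∈ lift L S, ∃ v : ℤ × ℤ, v ≠ 0 ∧
        (∃ w : ℤ × ℤ, v = ((L : ℤ) * w.1, (L : ℤ) * w.2)) ∧
        (fun q => q + v) '' liftComp L S p = liftComp L S p) ∧
    (Wraps L S ↔ ∃ p ∈ lift L S, (liftComp L S p).Infinite) := by
  haveI : NeZero L := ⟨hL.ne'⟩
  have h1 : Wraps L S → ∃ p ∈ lift L S, ∃ v : ℤ × ℤ, v ≠ 0 ∧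
      (∃ w : ℤ × ℤ, v = ((L : ℤ) * w.1, (L : ℤ) * w.2)) ∧
      (fun q => q + v) '' liftComp L S p = liftComp L S p := by
    rintro ⟨x, n, d, hstep, hmem, hc0, hne0⟩
    set p : ℤ × ℤ := ((x.1.val : ℤ), (x.2.val : ℤ)) with hpdef
    have hcp : castPair L p = x := by
      simp [castPair, hpdef, ZMod.natCast_val, ZMod.cast_id]
    have hmem' : ∀ m ≤ n, p + (∑ i : Fin n, if (i : ℕ) < m then d i else 0) ∈ lift L S := by
      intro m hm
      show castPair L _ ∈ S
      rw [castPair_add, hcp]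
      exact hmem m hm
    have hpl : p ∈ lift L S := by
      have := hmem' 0 (Nat.zero_le n)
      simpa using this
    set v : ℤ × ℤ := ∑ i, d i with hvdef
    have hkey : p + v ∈ liftComp L S p := walk_to_path L S p n d hstep hmem'
    have hc0' : castPair L v = 0 := hc0
    refine ⟨p, hpl, v, hne0, ?_, ?_⟩
    · have hd1 : (L : ℤ) ∣ v.1 := by
        have := congrArg Prod.fst hc0'
        exact (ZMod.intCast_zmod_eq_zero_iff_dvd v.1 L).mp this
      have hd2 : (L : ℤ) ∣ v.2 := by
        have := congrArg Prod.snd hc0'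
        exact (ZMod.intCast_zmod_eq_zero_iff_dvd v.2 L).mp this
      obtain ⟨w1, hw1⟩ := hd1
      obtain ⟨w2, hw2⟩ := hd2
      exact ⟨(w1, w2), Prod.ext hw1 hw2⟩
    · have himg : (fun q => q + v) '' liftComp L S p = liftComp L S (p + v) := by
        ext q
        simp only [Set.mem_image]
        constructor
        · rintro ⟨r, hr, rfl⟩
          exact compTranslate hc0' hr
        · intro hq
          refine ⟨q - v, ?_, by abel⟩
          have hneg : castPair L (-v) = 0 := by rw [castPair_neg, hc0', neg_zero]
          have := compTranslate hneg hq
          have he1 : p + v + -v = p := by abel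
          have he2 : q + -v = q - v := by abel
          rwa [he1, he2] at this
      rw [himg, comp_eq_of_mem hkey]
  have h2 : (∃ p ∈ lift L S, ∃ v : ℤ × ℤ, v ≠ 0 ∧
      (∃ w : ℤ × ℤ, v = ((L : ℤ) * w.1, (L : ℤ) * w.2)) ∧
      (fun q => q + v) '' liftComp L S p = liftComp L S p) → Wraps L S := by
    rintro ⟨p, hp, v, hvne, ⟨w, hw⟩, himg⟩
    have hc0 : castPair L v = 0 := by
      rw [hw]
      simp [castPair, Prod.ext_iff]
    have hpv : p + v ∈ liftComp L S p := by
      rw [← himg]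
      exact ⟨p, Relation.ReflTransGen.refl, rfl⟩
    obtain ⟨n, d, hstep, hmem, hsum⟩ := path_to_walk L S hp hpv
    refine ⟨castPair L p, n, d, hstep, ?_, ?_, ?_⟩
    · intro m hm
      have := hmem m hm
      rwa [show (castPair L p + castPair L (∑ i : Fin n, if (i : ℕ) < m then d i else 0))
        = castPair L (p + ∑ i : Fin n, if (i : ℕ) < m then d i else 0) from
        (castPair_add L _ _).symm]
    · rw [show (∑ i, d i) = v from add_left_cancel hsum, hc0]
    · rw [show (∑ i, d i) = v from add_left_cancel hsum]
      exact hvne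
  have h3 : (∃ p ∈ lift L S, ∃ v : ℤ × ℤ, v ≠ 0 ∧
      (∃ w : ℤ × ℤ, v = ((L : ℤ) * w.1, (L : ℤ) * w.2)) ∧
      (fun q => q + v) '' liftComp L S p = liftComp L S p) →
      ∃ p ∈ lift L S, (liftComp L S p).Infinite := by
    rintro ⟨p, hp, v, hvne, _, himg⟩
    refine ⟨p, hp, ?_⟩
    have hmemn : ∀ m : ℕ, p + m • v ∈ liftComp L S p := by
      intro m
      induction m with
      | zero => rw [zero_smul, add_zero]; exact Relation.ReflTransGen.refl
      | succ m ih =>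
        have : (p + m • v) + v ∈ liftComp L S p := by
          rw [← himg]
          exact ⟨p + m • v, ih, rfl⟩
        rwa [succ_nsmul, ← add_assoc]
    apply Set.infinite_of_injective_forall_mem (f := fun m : ℕ => p + m • v)
    · intro a b hab
      have hsv : a • v = b • v := by
        have := hab
        simpa using add_left_cancel this
      have hvcases : v.1 ≠ 0 ∨ v.2 ≠ 0 := by
        by_contra hcon
        push_neg at hcon
        exact hvne (Prod.ext hcon.1 hcon.2)
      rcases hvcases with hv1 | hv1
      · have : (a : ℤ) * v.1 = (b : ℤ) * v.1 := by
          have := congrArg Prod.fst hsv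
          simpa [nsmul_eq_mul] using this
        exact_mod_cast mul_right_cancel₀ hv1 this
      · have : (a : ℤ) * v.2 = (b : ℤ) * v.2 := by
          have := congrArg Prod.snd hsv
          simpa [nsmul_eq_mul] using this
        exact_mod_cast mul_right_cancel₀ hv1 this
    · exact hmemn
  have h4 : (∃ p ∈ lift L S, (liftComp L S p).Infinite) → Wraps L S := by
    rintro ⟨p, hp, hinf⟩
    obtain ⟨q1, hq1, q2, hq2, hneq, heq⟩ :=
      hinf.exists_ne_map_eq_of_mapsTo (f := castPair L)
        (fun x _ => Set.mem_univ (castPair L x)) Set.finite_univ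
    have hq1l : q1 ∈ lift L S := mem_lift_of_mem_comp hp hq1
    have hpath : Relation.ReflTransGen
        (fun u v => u ∈ lift L S ∧ v ∈ lift L S ∧ AdjZ u v) q1 q2 :=
      Relation.ReflTransGen.trans (comp_symm hq1) hq2
    obtain ⟨n, d, hstep, hmem, hsum⟩ := path_to_walk L S hq1l hpath
    refine ⟨castPair L q1, n, d, hstep, ?_, ?_, ?_⟩
    · intro m hm
      have := hmem m hm
      rwa [show (castPair L q1 + castPair L (∑ i : Fin n, if (i : ℕ) < m then d i else 0))
        = castPair L (q1 + ∑ i : Fin n, if (i : ℕ) < m then d i else 0) from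
        (castPair_add L _ _).symm]
    · have : castPair L (q1 + ∑ i, d i) = castPair L q1 := by rw [hsum, heq]
      rw [castPair_add] at this
      exact by
        have := add_left_cancel (a := castPair L q1)
          (show castPair L q1 + castPair L (∑ i, d i) = castPair L q1 + 0 by
            rw [add_zero]; exact this)
        exact this
    · intro hcon
      apply hneq
      rw [← hsum, hcon, add_zero]
  exact ⟨⟨h1, h2⟩, ⟨fun hw => h3 (h1 hw), h4⟩⟩
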